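/- arXiv:2503.03661 — 5 statements merged into one kernel-verified Lean document; each statement's English description precedes it below -/
import Mathlib

section
/- Let n > 2, k ≥ 1 odd, and set b = 2k/(k+1), δ = (n(k+1)-2k)/(2k), a = 1/b. If v ∈ C²((0,∞)) satisfies (r^{n-k}(v')^k)' + r^{n-1}(r v' + κ v + c_{n,k}^{-1}|v|^{q-1}v) = 0 on (0,∞), and θ is defined by v(r) = θ(s) with s = a r^b, then θ satisfies (s^δ (θ')^k)' + s^δ (b s θ' + κ θ + c_{n,k}^{-1}|θ|^{q-1}θ) = 0 on (0,∞). -/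
/-- Change of variables `v(r) = θ(a r^b)` with `b = 2k/(k+1)`, `a = 1/b`,
`δ = (n(k+1)-2k)/(2k)`: it transforms the radial self-similar k-Hessian equation
`(r^{n-k}(v')^k)' + r^{n-1}(r v' + κ v + c⁻¹|v|^{q-1}v) = 0` into
`(s^δ(θ')^k)' + s^δ(b s θ' + κ θ + c⁻¹|θ|^{q-1}θ) = 0`. -/
theorem stmt2 (n k : ℕ) (q κ c a b δ : ℝ) (hn : 2 < n) (hk : 1 ≤ k) (hkodd : Odd k)
    (hq : (k : ℝ) < q) (hc : c = (1 / n) * (n.choose k))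
    (hb : b = 2 * k / (k + 1)) (hδ : δ = ((n : ℝ) * (k + 1) - 2 * k) / (2 * k))
    (ha : a = 1 / b)
    (v θ : ℝ → ℝ)
    (hv : ContDiffOn ℝ 2 v (Set.Ioi 0))
    (hode : ∀ r > (0 : ℝ),
      deriv (fun ρ => ρ ^ ((n : ℝ) - k) * (deriv v ρ) ^ k) r +
        r ^ ((n : ℝ) - 1) * (r * deriv v r + κ * v r + c⁻¹ * |v r| ^ (q - 1) * v r) = 0)
    (hθ : ∀ r > (0 : ℝ), v r = θ (a * r ^ b)) :
    ∀ s > (0 : ℝ),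
      deriv (fun σ => σ ^ δ * (deriv θ σ) ^ k) s +
        s ^ δ * (b * s * deriv θ s + κ * θ s + c⁻¹ * |θ s| ^ (q - 1) * θ s) = 0 := by
  have hkR : (1:ℝ) ≤ (k:ℝ) := by exact_mod_cast hk
  have hk0 : (0:ℝ) < (k:ℝ) := lt_of_lt_of_le zero_lt_one hkR
  have hk1 : (k:ℝ) + 1 ≠ 0 := by positivity
  have hkne : (k:ℝ) ≠ 0 := hk0.ne'
  have hb0 : (0:ℝ) < b := by rw [hb]; positivity
  have hbne : b ≠ 0 := hb0.ne'
  have ha0 : (0:ℝ) < a := by rw [ha]; positivity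
  have hab : a * b = 1 := by rw [ha]; field_simp
  have hbδ : b * (δ + 1) = (n:ℝ) := by
    rw [hb, hδ]; field_simp; ring
  have hbk : b * ((k:ℝ) + 1) = 2 * k := by rw [hb]; field_simp
  -- differentiability facts
  have hvD : ∀ ρ > (0:ℝ), DifferentiableAt ℝ v ρ := fun ρ hρ =>
    (hv.differentiableOn (by norm_num)).differentiableAt (isOpen_Ioi.mem_nhds hρ)
  have hdv : ContDiffOn ℝ 1 (deriv v) (Set.Ioi 0) := hv.deriv_of_isOpen isOpen_Ioi (by norm_num)
  have hdvD : ∀ ρ > (0:ℝ), DifferentiableAt ℝ (deriv v) ρ := fun ρ hρ =>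
    (hdv.differentiableOn (by norm_num)).differentiableAt (isOpen_Ioi.mem_nhds hρ)
  set F : ℝ → ℝ := fun ρ => ρ ^ ((n:ℝ) - (k:ℝ)) * (deriv v ρ) ^ k with hFdef
  have hFD : ∀ ρ > (0:ℝ), DifferentiableAt ℝ F ρ := fun ρ hρ =>
    ((Real.hasDerivAt_rpow_const (p := (n:ℝ) - (k:ℝ)) (Or.inl hρ.ne')).differentiableAt).mul
      ((hdvD ρ hρ).pow k)
  -- the substitution map σ ↦ (b σ)^(1/b)
  have hφpos : ∀ σ > (0:ℝ), (0:ℝ) < (b*σ) ^ (1/b) := fun σ hσ =>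
    Real.rpow_pos_of_pos (mul_pos hb0 hσ) _
  have hφb : ∀ σ > (0:ℝ), ((b*σ)^(1/b) : ℝ) ^ b = b * σ := by
    intro σ hσ
    rw [← Real.rpow_mul (mul_pos hb0 hσ).le, one_div, inv_mul_cancel₀ hbne, Real.rpow_one]
  have hθv : ∀ σ > (0:ℝ), θ σ = v ((b*σ)^(1/b)) := by
    intro σ hσ
    rw [hθ _ (hφpos σ hσ), hφb σ hσ, ← mul_assoc, hab, one_mul]
  have hφdiff : ∀ σ > (0:ℝ), HasDerivAt (fun t => (b*t)^(1/b)) ((b*σ)^(1/b-1)) σ := by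
    intro σ hσ
    have h1 : HasDerivAt (fun t : ℝ => b * t) b σ := by
      simpa using (hasDerivAt_id σ).const_mul b
    have h2 := (Real.hasDerivAt_rpow_const (x := b*σ) (p := 1/b)
      (Or.inl (mul_pos hb0 hσ).ne')).comp σ h1
    have h3 : 1/b * (b*σ)^(1/b-1) * b = (b*σ)^(1/b-1) := by field_simp
    have h4 : HasDerivAt (fun t => (b*t)^(1/b)) (1/b * (b*σ)^(1/b-1) * b) σ := h2
    rw [h3] at h4
    exact h4
  have hθdiff : ∀ σ > (0:ℝ), HasDerivAt θ (deriv v ((b*σ)^(1/b)) * (b*σ)^(1/b-1)) σ := by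
    intro σ hσ
    have hvh : HasDerivAt v (deriv v ((b*σ)^(1/b))) ((b*σ)^(1/b)) :=
      (hvD _ (hφpos σ hσ)).hasDerivAt
    have h2 := hvh.comp σ (hφdiff σ hσ)
    refine h2.congr_of_eventuallyEq ?_
    filter_upwards [isOpen_Ioi.mem_nhds hσ] with t ht
    exact hθv t ht
  have hθ' : ∀ σ > (0:ℝ), deriv θ σ = deriv v ((b*σ)^(1/b)) * (b*σ)^(1/b-1) :=
    fun σ hσ => (hθdiff σ hσ).deriv
  -- exponent identities
  have Hexp1 : (1/b - 1) * (k:ℝ) = -δ + 1/b * ((n:ℝ) - k) := by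
    field_simp
    linear_combination hbδ - hbk
  -- the key pointwise identity
  have key : ∀ σ > (0:ℝ), σ^δ * (deriv θ σ)^k = a^δ * F ((b*σ)^(1/b)) := by
    intro σ hσ
    have hbs : (0:ℝ) < b * σ := mul_pos hb0 hσ
    rw [hθ' σ hσ, mul_pow]
    simp only [hFdef]
    have h1 : ((b*σ)^(1/b-1) : ℝ)^k = (b*σ)^((1/b-1)*(k:ℝ)) := by
      rw [← Real.rpow_natCast ((b*σ)^(1/b-1)) k, ← Real.rpow_mul hbs.le]
    have h2 : (((b*σ)^(1/b) : ℝ))^((n:ℝ)-(k:ℝ)) = (b*σ)^(1/b * ((n:ℝ)-k)) := by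
      rw [← Real.rpow_mul hbs.le]
    have haδ : a^δ = (b:ℝ)^(-δ) := by
      rw [ha, one_div, Real.inv_rpow hb0.le, ← Real.rpow_neg hb0.le]
    have H : σ^δ * ((b*σ)^(1/b-1) : ℝ)^k = a^δ * (((b*σ)^(1/b) : ℝ))^((n:ℝ)-(k:ℝ)) := by
      rw [h1, h2, haδ, Real.mul_rpow hb0.le hσ.le, Real.mul_rpow hb0.le hσ.le, Hexp1,
        Real.rpow_add hb0, Real.rpow_add hσ]
      have hσδ : σ^δ * σ^(-δ) = 1 := by
        rw [← Real.rpow_add hσ]; simp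
      linear_combination (b^(-δ) * b^(1/b*((n:ℝ)-(k:ℝ))) * σ^(1/b*((n:ℝ)-(k:ℝ)))) * hσδ
    linear_combination ((deriv v ((b*σ)^(1/b)))^k) * H
  -- main computation
  intro s hs
  have hbs : (0:ℝ) < b * s := mul_pos hb0 hs
  set r : ℝ := (b*s)^(1/b) with hrdef
  have hr0 : (0:ℝ) < r := Real.rpow_pos_of_pos hbs _
  have hGeq : (fun σ => σ^δ * (deriv θ σ)^k) =ᶠ[nhds s] (fun σ => a^δ * F ((b*σ)^(1/b))) := by
    filter_upwards [isOpen_Ioi.mem_nhds hs] with σ hσ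
    exact key σ hσ
  have hcomp : HasDerivAt (fun σ => a^δ * F ((b*σ)^(1/b))) (a^δ * (deriv F r * (b*s)^(1/b-1))) s :=
    ((hFD r hr0).hasDerivAt.comp s (hφdiff s hs)).const_mul (a^δ)
  have hG' : deriv (fun σ => σ^δ * (deriv θ σ)^k) s = a^δ * (deriv F r * (b*s)^(1/b-1)) := by
    rw [hGeq.deriv_eq, hcomp.deriv]
  have hodeR := hode r hr0
  have hvθ : v r = θ s := by rw [hrdef]; exact (hθv s hs).symm
  have hvd : r * deriv v r = b * s * deriv θ s := by
    rw [hθ' s hs, ← hrdef]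
    have h5 : (b*s) * (b*s)^(1/b-1) = r := by
      rw [hrdef]
      nth_rewrite 1 [← Real.rpow_one (b*s)]
      rw [← Real.rpow_add hbs, show (1:ℝ) + (1/b - 1) = 1/b by ring]
    linear_combination (-(deriv v r)) * h5
  have Hfin : a^δ * (r^((n:ℝ)-1) * (b*s)^(1/b-1)) = s^δ := by
    rw [hrdef, ← Real.rpow_mul hbs.le, ← Real.rpow_add hbs,
      show 1/b*((n:ℝ)-1) + (1/b-1) = δ from by field_simp; linear_combination -hbδ,
      Real.mul_rpow hb0.le hs.le, ← mul_assoc, ← Real.mul_rpow ha0.le hb0.le, hab,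
      Real.one_rpow, one_mul]
  rw [hG']
  have hDF : deriv F r = -(r^((n:ℝ)-1) * (r * deriv v r + κ * v r + c⁻¹ * |v r|^(q-1) * v r)) := by
    linarith [hodeR]
  rw [hDF, hvθ, hvd]
  linear_combination (-(b * s * deriv θ s + κ * θ s + c⁻¹ * |θ s|^(q-1) * θ s)) * Hfin
end

section
/- Let v ∈ C²((0,∞)) solve (r^{n-k}(v')^k)' + r^{n-1}(r v' + κ v + c_{n,k}^{-1}|v|^{q-1}v) = 0, and define J_κ(r) = r^κ(v + r^{-k}(v')^k). Then J_κ'(r) = r^{κ-1}((κ-n) r^{-k}(v')^k − c_{n,k}^{-1}|v|^{q-1} v) for all r > 0. -/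
/-- The function `J_κ(r) = r^κ (v + r^{-k}(v')^k)` satisfies
`J_κ'(r) = r^{κ-1}((κ-n) r^{-k}(v')^k − c_{n,k}^{-1}|v|^{q-1} v)` along solutions of
`(r^{n-k}(v')^k)' + r^{n-1}(r v' + κ v + c_{n,k}^{-1}|v|^{q-1}v) = 0`. -/
theorem stmt8 (n k : ℕ) (q κ c : ℝ) (hn : 2 < n) (hk : 1 ≤ k) (hkodd : Odd k)
    (hq : (k : ℝ) < q) (hc : c = (1 / n) * (n.choose k))
    (v v' D : ℝ → ℝ)
    (hv : ∀ r > (0 : ℝ), HasDerivAt v (v' r) r)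
    (hD : ∀ r > (0 : ℝ),
      HasDerivAt (fun ρ => ρ ^ ((n : ℝ) - k) * (v' ρ) ^ k) (D r) r)
    (hode : ∀ r > (0 : ℝ), D r +
        r ^ ((n : ℝ) - 1) * (r * v' r + κ * v r + c⁻¹ * |v r| ^ (q - 1) * v r) = 0) :
    ∀ r > (0 : ℝ),
      HasDerivAt (fun ρ => ρ ^ κ * (v ρ + ρ ^ (-(k : ℝ)) * (v' ρ) ^ k))
        (r ^ (κ - 1) * ((κ - (n : ℝ)) * r ^ (-(k : ℝ)) * (v' r) ^ k -
          c⁻¹ * |v r| ^ (q - 1) * v r)) r := by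
  intro r hr
  have hvr := hv r hr
  have hDr := hD r hr
  have hode' := hode r hr
  have h1 : HasDerivAt (fun ρ : ℝ => ρ ^ κ * v ρ)
      (κ * r ^ (κ - 1) * v r + r ^ κ * v' r) r :=
    (Real.hasDerivAt_rpow_const (p := κ) (Or.inl hr.ne')).mul hvr
  have h2 : HasDerivAt
      (fun ρ : ℝ => ρ ^ (κ - n) * (ρ ^ ((n : ℝ) - k) * (v' ρ) ^ k))
      ((κ - n) * r ^ (κ - n - 1) * (r ^ ((n : ℝ) - k) * (v' r) ^ k)
        + r ^ (κ - n) * D r) r :=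
    (Real.hasDerivAt_rpow_const (p := κ - n) (Or.inl hr.ne')).mul hDr
  have hsum := h1.add h2
  have heq : (fun ρ : ℝ => ρ ^ κ * (v ρ + ρ ^ (-(k : ℝ)) * (v' ρ) ^ k))
      =ᶠ[nhds r]
      (fun ρ : ℝ => ρ ^ κ * v ρ + ρ ^ (κ - n) * (ρ ^ ((n : ℝ) - k) * (v' ρ) ^ k)) := by
    filter_upwards [eventually_gt_nhds hr] with ρ hρ
    have e : ρ ^ κ * ρ ^ (-(k : ℝ)) = ρ ^ (κ - n) * ρ ^ ((n : ℝ) - k) := by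
      rw [← Real.rpow_add hρ, ← Real.rpow_add hρ]; ring_nf
    calc ρ ^ κ * (v ρ + ρ ^ (-(k : ℝ)) * (v' ρ) ^ k)
        = ρ ^ κ * v ρ + (ρ ^ κ * ρ ^ (-(k : ℝ))) * (v' ρ) ^ k := by ring
      _ = ρ ^ κ * v ρ + ρ ^ (κ - n) * (ρ ^ ((n : ℝ) - k) * (v' ρ) ^ k) := by
          rw [e]; ring
  have hfinal := hsum.congr_of_eventuallyEq heq
  refine hfinal.congr_deriv ?_
  symm
  have hDval : D r = -(r ^ ((n : ℝ) - 1) *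
      (r * v' r + κ * v r + c⁻¹ * |v r| ^ (q - 1) * v r)) := by linarith
  rw [hDval]
  have e1 : r ^ (κ - n) * r ^ ((n : ℝ) - 1) = r ^ (κ - 1) := by
    rw [← Real.rpow_add hr]; ring_nf
  have e2 : r ^ (κ - n - 1) * r ^ ((n : ℝ) - k) = r ^ (κ - 1) * r ^ (-(k : ℝ)) := by
    rw [← Real.rpow_add hr, ← Real.rpow_add hr]; ring_nf
  have e3 : r ^ (κ - 1) * r = r ^ κ := by
    nth_rewrite 2 [show r = r ^ (1 : ℝ) from (Real.rpow_one r).symm]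
    rw [← Real.rpow_add hr]; ring_nf
  linear_combination (r * v' r + κ * v r + c⁻¹ * |v r| ^ (q - 1) * v r) * e1
    - ((κ - n) * (v' r) ^ k) * e2 + (v' r) * e3
end

section
/- Suppose κ < n, k ≥ 1 odd, q > k, and let γ̲ = (c_{n,k}(n-κ))^{1/(q-1)}. If θ is a C¹ solution on [0,∞) of (s^δ(θ')^k)' + s^δ(b s θ' + κθ + c_{n,k}^{-1}|θ|^{q-1}θ) = 0 with θ(0) = γ ∈ (0, γ̲] and θ'(0) = 0, and θ satisfies |θ| ≤ γ on [0,∞), then θ(s) > 0 for all s ∈ [0,∞). -/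
set_option maxHeartbeats 2000000 in
/-- Positivity of small solutions: if `κ < n` and `0 < γ ≤ γ̲ = (c_{n,k}(n-κ))^{1/(q-1)}`,
then the solution `θ` of `(s^δ(θ')^k)' + s^δ(b s θ' + κθ + c_{n,k}^{-1}|θ|^{q-1}θ) = 0`
with `θ(0) = γ`, `θ'(0) = 0` and `|θ| ≤ γ` is strictly positive on `[0,∞)`. -/
theorem stmt9 (n k : ℕ) (q κ c δ b γ γunder : ℝ) (hn : 2 < n) (hk : 1 ≤ k)
    (hkodd : Odd k) (hq : (k : ℝ) < q) (hκ : κ < n)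
    (hc : c = (1 / n) * (n.choose k))
    (hδ : δ = ((n : ℝ) * (k + 1) - 2 * k) / (2 * k)) (hb : b = 2 * k / (k + 1))
    (hγunder : γunder = (c * ((n : ℝ) - κ)) ^ ((1 : ℝ) / (q - 1)))
    (hγpos : 0 < γ) (hγle : γ ≤ γunder)
    (θ θ' D : ℝ → ℝ)
    (hθ : ∀ s ≥ (0 : ℝ), HasDerivAt θ (θ' s) s)
    (hθ'cont : ContinuousOn θ' (Set.Ici 0))
    (hD : ∀ s > (0 : ℝ),
      HasDerivAt (fun σ => σ ^ δ * (θ' σ) ^ k) (D s) s)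
    (hode : ∀ s > (0 : ℝ), D s +
        s ^ δ * (b * s * θ' s + κ * θ s + c⁻¹ * |θ s| ^ (q - 1) * θ s) = 0)
    (h0 : θ 0 = γ) (h0' : θ' 0 = 0)
    (hbound : ∀ s ≥ (0 : ℝ), |θ s| ≤ γ) :
    ∀ s ≥ (0 : ℝ), 0 < θ s := by
  -- basic numeric facts
  have hkR : (1 : ℝ) ≤ (k : ℝ) := by exact_mod_cast hk
  have hnR : (3 : ℝ) ≤ (n : ℝ) := by exact_mod_cast hn
  have hq1 : (0 : ℝ) < q - 1 := by linarith
  have hδpos : 0 < δ := by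
    rw [hδ]
    apply div_pos
    · nlinarith
    · nlinarith
  have hnκ : (0 : ℝ) < (n : ℝ) - κ := by linarith
  have hcnn : 0 ≤ c := by rw [hc]; positivity
  have hcpos : 0 < c := by
    rcases hcnn.eq_or_lt with hc0 | hcpos
    · exfalso
      have : γunder = 0 := by
        rw [hγunder, ← hc0, zero_mul, Real.zero_rpow]
        positivity
      linarith
    · exact hcpos
  have hbδ : b * (δ + 1) = n := by
    have hk0 : (k : ℝ) ≠ 0 := by linarith
    have hk1 : (k : ℝ) + 1 ≠ 0 := by linarith
    rw [hb, hδ]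
    field_simp
    ring
  have hγupow : γunder ^ (q - 1) = c * ((n : ℝ) - κ) := by
    rw [hγunder, one_div, Real.rpow_inv_rpow (by positivity) hq1.ne']
  -- key estimates
  have hest : ∀ t : ℝ, 0 ≤ t → t ≤ γunder → c⁻¹ * t ^ (q - 1) ≤ (n : ℝ) - κ := by
    intro t ht hle
    have h1 : t ^ (q - 1) ≤ γunder ^ (q - 1) := Real.rpow_le_rpow ht hle hq1.le
    rw [hγupow] at h1
    have h2 : c⁻¹ * t ^ (q - 1) ≤ c⁻¹ * (c * ((n : ℝ) - κ)) :=
      mul_le_mul_of_nonneg_left h1 (inv_nonneg.mpr hcpos.le)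
    rwa [inv_mul_cancel_left₀ hcpos.ne'] at h2
  have hestlt : ∀ t : ℝ, 0 ≤ t → t < γunder → c⁻¹ * t ^ (q - 1) < (n : ℝ) - κ := by
    intro t ht hle
    have h1 : t ^ (q - 1) < γunder ^ (q - 1) := Real.rpow_lt_rpow ht hle hq1
    rw [hγupow] at h1
    have h2 : c⁻¹ * t ^ (q - 1) < c⁻¹ * (c * ((n : ℝ) - κ)) :=
      mul_lt_mul_of_pos_left h1 (inv_pos.mpr hcpos)
    rwa [inv_mul_cancel_left₀ hcpos.ne'] at h2
  -- continuity of θ on [0,∞)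
  have hθc : ContinuousOn θ (Set.Ici 0) := fun x hx =>
    (hθ x hx).continuousAt.continuousWithinAt
  -- main argument, by contradiction
  by_contra hcon
  push_neg at hcon
  obtain ⟨a, ha0, ha⟩ := hcon
  -- find a zero of θ
  have hivt : (0 : ℝ) ∈ Set.Icc (θ a) (θ 0) := ⟨ha, by rw [h0]; exact hγpos.le⟩
  obtain ⟨z, hzmem, hz0⟩ :=
    intermediate_value_Icc' ha0 (hθc.mono (Set.Icc_subset_Ici_self)) hivt
  -- the set of zeros in [0, z]
  set S : Set ℝ := Set.Icc 0 z ∩ θ ⁻¹' {0} with hS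
  have hSclosed : IsClosed S :=
    (hθc.mono (fun x hx => hx.1)).preimage_isClosed_of_isClosed isClosed_Icc
      isClosed_singleton
  have hSne : S.Nonempty := ⟨z, ⟨hzmem.1, le_refl z⟩, hz0⟩
  have hSbdd : BddBelow S := ⟨0, fun x hx => hx.1.1⟩
  set s₀ : ℝ := sInf S with hs₀def
  have hs₀S : s₀ ∈ S := hSclosed.csInf_mem hSne hSbdd
  have hθs₀ : θ s₀ = 0 := hs₀S.2
  have hs₀0 : 0 ≤ s₀ := hs₀S.1.1
  have hs₀z : s₀ ≤ z := hs₀S.1.2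
  have hs₀pos : 0 < s₀ := by
    rcases hs₀0.eq_or_lt with h | h
    · exfalso; rw [← h] at hθs₀; rw [h0] at hθs₀; linarith
    · exact h
  -- θ is positive on [0, s₀)
  have hpos : ∀ s : ℝ, 0 ≤ s → s < s₀ → 0 < θ s := by
    intro s hs hss
    by_contra h
    push_neg at h
    have hivt2 : (0 : ℝ) ∈ Set.Icc (θ s) (θ 0) := ⟨h, by rw [h0]; exact hγpos.le⟩
    obtain ⟨t, htmem, ht0⟩ :=
      intermediate_value_Icc' hs (hθc.mono (Set.Icc_subset_Ici_self)) hivt2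
    have htS : t ∈ S := ⟨⟨htmem.1, le_trans htmem.2 (le_trans hss.le hs₀z)⟩, ht0⟩
    have := csInf_le hSbdd htS
    linarith [htmem.2]
  -- choose s₁ close to s₀ where θ < γunder
  have hγupos : 0 < γunder := lt_of_lt_of_le hγpos hγle
  have hθlt : θ s₀ < γunder := by rw [hθs₀]; exact hγupos
  have hev : ∀ᶠ x in nhds s₀, θ x < γunder :=
    ((hθ s₀ hs₀0).continuousAt).eventually_lt continuousAt_const hθlt
  obtain ⟨ε, hε, hball⟩ := Metric.eventually_nhds_iff_ball.mp hev
  set s₁ : ℝ := max (s₀ - ε / 2) (s₀ / 2) with hs₁def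
  have hs₁pos : 0 < s₁ := lt_of_lt_of_le (by linarith) (le_max_right _ _)
  have hs₁lt : s₁ < s₀ := max_lt (by linarith) (by linarith)
  have hball' : ∀ x : ℝ, s₁ < x → x ≤ s₀ → θ x < γunder := by
    intro x hx1 hx2
    apply hball
    rw [Metric.mem_ball, Real.dist_eq, abs_of_nonpos (by linarith)]
    have : s₀ - ε / 2 ≤ s₁ := le_max_left _ _
    linarith
  -- the energy-type function J
  set J : ℝ → ℝ := fun s => b * s ^ (δ + 1) * θ s + s ^ δ * (θ' s) ^ k with hJdef
  have hJderiv : ∀ s : ℝ, 0 < s →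
      HasDerivAt J (s ^ δ * ((((n : ℝ) - κ) - c⁻¹ * |θ s| ^ (q - 1)) * θ s)) s := by
    intro s hs
    have h1 : HasDerivAt (fun σ : ℝ => σ ^ (δ + 1)) ((δ + 1) * s ^ δ) s := by
      have := Real.hasDerivAt_rpow_const (x := s) (p := δ + 1) (Or.inl hs.ne')
      simpa [add_sub_cancel_right] using this
    have h2 := (h1.const_mul b).mul (hθ s hs.le)
    have h5 := h2.add (hD s hs)
    have hDs : D s = -(s ^ δ * (b * s * θ' s + κ * θ s + c⁻¹ * |θ s| ^ (q - 1) * θ s)) := by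
      linarith [hode s hs]
    refine h5.congr_deriv (Eq.symm ?_)
    rw [hDs, Real.rpow_add_one hs.ne']
    linear_combination (-(s ^ δ * θ s)) * hbδ
  -- continuity of J on [0, s₀]
  have hc1 : ContinuousOn (fun s : ℝ => s ^ (δ + 1)) (Set.Icc 0 s₀) := fun x _ =>
    (Real.continuousAt_rpow_const x (δ + 1) (Or.inr (by positivity))).continuousWithinAt
  have hc2 : ContinuousOn (fun s : ℝ => s ^ δ) (Set.Icc 0 s₀) := fun x _ =>
    (Real.continuousAt_rpow_const x δ (Or.inr hδpos.le)).continuousWithinAt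
  have hIccsub : Set.Icc (0 : ℝ) s₀ ⊆ Set.Ici 0 := fun x hx => hx.1
  have hJcont : ContinuousOn J (Set.Icc 0 s₀) :=
    ((continuousOn_const.mul hc1).mul (hθc.mono hIccsub)).add
      (hc2.mul ((hθ'cont.mono hIccsub).pow k))
  -- J is monotone on [0, s₀]
  have hbnd : ∀ x : ℝ, 0 < x → x < s₀ → 0 ≤ deriv J x := by
    intro x hx hxs
    rw [(hJderiv x hx).deriv]
    apply mul_nonneg (Real.rpow_nonneg hx.le δ)
    apply mul_nonneg _ (hpos x hx.le hxs).le
    have h1 := hest (|θ x|) (abs_nonneg _) (le_trans (hbound x hx.le) hγle)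
    linarith
  have hMono : MonotoneOn J (Set.Icc 0 s₀) := by
    apply monotoneOn_of_deriv_nonneg (convex_Icc _ _) hJcont
    · intro x hx
      rw [interior_Icc] at hx
      exact (hJderiv x hx.1).differentiableAt.differentiableWithinAt
    · intro x hx
      rw [interior_Icc] at hx
      exact hbnd x hx.1 hx.2
  have hStrict : StrictMonoOn J (Set.Icc s₁ s₀) := by
    apply strictMonoOn_of_deriv_pos (convex_Icc _ _)
      (hJcont.mono (Set.Icc_subset_Icc_left hs₁pos.le))
    intro x hx
    rw [interior_Icc] at hx
    have hx0 : 0 < x := lt_trans hs₁pos hx.1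
    rw [(hJderiv x hx0).deriv]
    apply mul_pos (Real.rpow_pos_of_pos hx0 δ)
    apply mul_pos _ (hpos x hx0.le hx.2)
    have hθxpos : 0 < θ x := hpos x hx0.le hx.2
    have habs : |θ x| = θ x := abs_of_pos hθxpos
    have h1 := hestlt (|θ x|) (abs_nonneg _)
      (by rw [habs]; exact hball' x hx.1 hx.2.le)
    linarith
  -- J 0 = 0
  have hJ0 : J 0 = 0 := by
    have hk0 : k ≠ 0 := by omega
    simp [hJdef, Real.zero_rpow hδpos.ne', Real.zero_rpow (by linarith : δ + 1 ≠ 0), h0',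
      zero_pow hk0]
  -- hence J s₀ > 0
  have hJs₁ : 0 ≤ J s₁ := by
    have := hMono (Set.left_mem_Icc.mpr hs₀0) ⟨hs₁pos.le, hs₁lt.le⟩ hs₁pos.le
    rw [hJ0] at this
    exact this
  have hJs₀ : 0 < J s₀ := by
    have := hStrict (Set.left_mem_Icc.mpr hs₁lt.le) (Set.right_mem_Icc.mpr hs₁lt.le) hs₁lt
    linarith
  -- so θ' s₀ > 0
  have hJval : J s₀ = s₀ ^ δ * (θ' s₀) ^ k := by simp [hJdef, hθs₀]
  have hpowpos : 0 < (θ' s₀) ^ k := by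
    rw [hJval] at hJs₀
    nlinarith [Real.rpow_pos_of_pos hs₀pos δ, Real.rpow_nonneg hs₀0 δ]
  have hθ'pos : 0 < θ' s₀ := by
    by_contra h
    push_neg at h
    have := hkodd.pow_nonpos h
    linarith
  -- slope contradiction
  have hslope := hasDerivAt_iff_tendsto_slope.mp (hθ s₀ hs₀0)
  have hmem1 : {x : ℝ | 0 < slope θ s₀ x} ∈ nhdsWithin s₀ {s₀}ᶜ :=
    hslope (Ioi_mem_nhds hθ'pos)
  have hle : nhdsWithin s₀ (Set.Iio s₀) ≤ nhdsWithin s₀ {s₀}ᶜ :=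
    nhdsWithin_mono s₀ (fun x hx => ne_of_lt hx)
  have hmem2 : {x : ℝ | 0 < slope θ s₀ x} ∈ nhdsWithin s₀ (Set.Iio s₀) := hle hmem1
  have hmem3 : Set.Ioi (0 : ℝ) ∈ nhdsWithin s₀ (Set.Iio s₀) :=
    mem_nhdsWithin_of_mem_nhds (Ioi_mem_nhds hs₀pos)
  have hmem4 : Set.Iio s₀ ∈ nhdsWithin s₀ (Set.Iio s₀) := self_mem_nhdsWithin
  obtain ⟨x, ⟨⟨hx1, hx2⟩, hx3⟩⟩ :=
    Filter.nonempty_of_mem (Filter.inter_mem (Filter.inter_mem hmem2 hmem3) hmem4)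
  have hxpos : (0 : ℝ) < x := hx2
  have hxlt : x < s₀ := hx3
  have hslopeval : slope θ s₀ x = (θ x - θ s₀) / (x - s₀) := slope_def_field θ s₀ x
  have hθx : 0 < θ x := hpos x hxpos.le hxlt
  simp only [Set.mem_setOf_eq] at hx1
  rw [hslopeval, hθs₀, sub_zero] at hx1
  have hxneg : x - s₀ < 0 := by linarith
  have := div_pos_iff.mp hx1
  rcases this with ⟨h1, h2⟩ | ⟨h1, h2⟩ <;> linarith
end

section
/- Suppose κ ≥ n, k ≥ 1 odd, q > k. Then there is no solution θ ∈ C¹([0,∞)) of (s^δ(θ')^k)' + s^δ(b s θ' + κθ + c_{n,k}^{-1}|θ|^{q-1}θ) = 0 with θ(0) = γ > 0, θ'(0) = 0, that is strictly positive on all of [0,∞). -/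
set_option maxHeartbeats 1600000 in
/-- Nonexistence of globally positive solutions when `κ ≥ n`: no solution of
`(s^δ(θ')^k)' + s^δ(b s θ' + κθ + c_{n,k}^{-1}|θ|^{q-1}θ) = 0` with `θ(0) = γ > 0`,
`θ'(0) = 0` can be strictly positive on all of `[0,∞)`. -/
theorem stmt10 (n k : ℕ) (q κ c δ b γ : ℝ) (hn : 2 < n) (hk : 1 ≤ k)
    (hkodd : Odd k) (hq : (k : ℝ) < q) (hκ : (n : ℝ) ≤ κ)
    (hc : c = (1 / n) * (n.choose k))
    (hδ : δ = ((n : ℝ) * (k + 1) - 2 * k) / (2 * k)) (hb : b = 2 * k / (k + 1))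
    (hγpos : 0 < γ)
    (θ θ' D : ℝ → ℝ)
    (hθ : ∀ s ≥ (0 : ℝ), HasDerivAt θ (θ' s) s)
    (hθ'cont : ContinuousOn θ' (Set.Ici 0))
    (hD : ∀ s > (0 : ℝ),
      HasDerivAt (fun σ => σ ^ δ * (θ' σ) ^ k) (D s) s)
    (hode : ∀ s > (0 : ℝ), D s +
        s ^ δ * (b * s * θ' s + κ * θ s + c⁻¹ * |θ s| ^ (q - 1) * θ s) = 0)
    (h0 : θ 0 = γ) (h0' : θ' 0 = 0)
    (hpos : ∀ s ≥ (0 : ℝ), 0 < θ s) :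
    False := by
  have hkR : (0:ℝ) < k := by exact_mod_cast hk
  have hnR : (2:ℝ) < n := by exact_mod_cast hn
  have hδpos : 0 < δ := by
    rw [hδ]; apply div_pos; nlinarith; nlinarith
  have hbpos : 0 < b := by rw [hb]; positivity
  have hcnn : 0 ≤ c := by rw [hc]; positivity
  obtain ⟨J, hJdef⟩ : ∃ J : ℝ → ℝ,
      J = fun s => b * (s ^ (δ+1) * θ s) + s ^ δ * θ' s ^ k := ⟨_, rfl⟩
  have hbn : b * (δ + 1) = n := by rw [hb, hδ]; field_simp; ring
  have hJd : ∀ s > (0:ℝ), HasDerivAt J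
      (s ^ δ * (((n:ℝ) - κ) * θ s - c⁻¹ * |θ s| ^ (q-1) * θ s)) s := by
    intro s hs
    have hp : HasDerivAt (fun σ : ℝ => σ ^ (δ+1)) ((δ+1) * s ^ δ) s := by
      have := Real.hasDerivAt_rpow_const (x := s) (p := δ+1) (Or.inl hs.ne')
      simpa [add_sub_cancel_right] using this
    have h1 := (hp.mul (hθ s hs.le)).const_mul b
    have h2 := h1.add (hD s hs)
    have hDval : D s = -(s ^ δ * (b * s * θ' s + κ * θ s + c⁻¹ * |θ s| ^ (q-1) * θ s)) := by
      have := hode s hs; linarith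
    have hs1 : s ^ (δ+1) = s ^ δ * s := by rw [Real.rpow_add hs, Real.rpow_one]
    have key : b * ((δ+1) * s ^ δ * θ s + s ^ (δ+1) * θ' s) + D s
        = s ^ δ * ((b * (δ+1) - κ) * θ s - c⁻¹ * |θ s| ^ (q-1) * θ s) := by
      rw [hDval, hs1]; ring
    rw [hbn] at key
    rw [key] at h2
    rw [hJdef]
    exact h2
  have hθc : ContinuousOn θ (Set.Ici 0) := fun s hs => (hθ s hs).continuousAt.continuousWithinAt
  have hrp : ∀ (e : ℝ), 0 < e → ContinuousOn (fun s : ℝ => s ^ e) (Set.Ici 0) :=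
    fun e he s _ => (Real.continuousAt_rpow_const s e (Or.inr he.le)).continuousWithinAt
  have hJcont : ContinuousOn J (Set.Ici 0) := by
    rw [hJdef]
    exact (continuousOn_const.mul ((hrp _ (by linarith)).mul hθc)).add
      ((hrp _ hδpos).mul (hθ'cont.pow k))
  have hJ0 : J 0 = 0 := by
    have h1 : (0:ℝ) ^ (δ + 1) = 0 := Real.zero_rpow (by linarith)
    have h2 : (0:ℝ) ^ δ = 0 := Real.zero_rpow hδpos.ne'
    simp [hJdef, h1, h2]
  have hderiv_nonpos : ∀ x ∈ interior (Set.Ici (0:ℝ)), deriv J x ≤ 0 := by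
    rw [interior_Ici]
    intro x hx
    rw [(hJd x hx).deriv]
    have hθx := hpos x hx.le
    have habs : |θ x| = θ x := abs_of_pos hθx
    have h1 : ((n:ℝ) - κ) * θ x ≤ 0 := mul_nonpos_of_nonpos_of_nonneg (by linarith) hθx.le
    have h2 : 0 ≤ c⁻¹ * |θ x| ^ (q-1) * θ x := by rw [habs]; positivity
    have hxp : 0 < x ^ δ := Real.rpow_pos_of_pos hx δ
    nlinarith [hxp]
  have hanti : AntitoneOn J (Set.Ici 0) := by
    apply antitoneOn_of_deriv_nonpos (convex_Ici 0) hJcont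
    · rw [interior_Ici]
      exact fun x hx => (hJd x hx).differentiableAt.differentiableWithinAt
    · exact hderiv_nonpos
  have hJle : ∀ s > (0:ℝ), J s ≤ 0 := fun s hs =>
    hJ0 ▸ hanti Set.self_mem_Ici (Set.mem_Ici.mpr hs.le) hs.le
  have hkey : ∀ s > (0:ℝ), b * s * θ s ≤ (-θ' s) ^ k := by
    intro s hs
    have h := hJle s hs
    have hs1 : s ^ (δ+1) = s ^ δ * s := by rw [Real.rpow_add hs, Real.rpow_one]
    have hxp : 0 < s ^ δ := Real.rpow_pos_of_pos hs δ
    have h2 : s ^ δ * (b * s * θ s + θ' s ^ k) ≤ 0 := by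
      have he : s ^ δ * (b * s * θ s + θ' s ^ k) = J s := by
        simp only [hJdef]; rw [hs1]; ring
      rw [he]; exact h
    have h3 : b * s * θ s + θ' s ^ k ≤ 0 := by
      by_contra hcon
      push_neg at hcon
      nlinarith [mul_pos hxp hcon]
    rw [Odd.neg_pow hkodd]
    linarith
  rcases eq_or_lt_of_le hk with hk1 | hk2
  · -- k = 1 case
    have hk1' : k = 1 := hk1.symm
    subst hk1'
    have hn0 : (0:ℝ) < n := by linarith
    have hc1 : c = 1 := by
      rw [hc, Nat.choose_one_right, one_div, inv_mul_cancel₀ hn0.ne']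
    have hcinv : c⁻¹ = 1 := by rw [hc1, inv_one]
    have hderiv_neg : ∀ x ∈ interior (Set.Ici (0:ℝ)), deriv J x < 0 := by
      rw [interior_Ici]
      intro x hx
      rw [(hJd x hx).deriv]
      have hθx := hpos x hx.le
      have habs : |θ x| = θ x := abs_of_pos hθx
      have h1 : ((n:ℝ) - κ) * θ x ≤ 0 := mul_nonpos_of_nonpos_of_nonneg (by linarith) hθx.le
      have h2 : 0 < c⁻¹ * |θ x| ^ (q-1) * θ x := by
        rw [habs, hcinv]
        have := Real.rpow_pos_of_pos hθx (q-1)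
        nlinarith
      have hxp : 0 < x ^ δ := Real.rpow_pos_of_pos hx δ
      have hneg : ((n:ℝ) - κ) * θ x - c⁻¹ * |θ x| ^ (q-1) * θ x < 0 := by linarith
      exact mul_neg_of_pos_of_neg hxp hneg
    have hstrict : StrictAntiOn J (Set.Ici 0) :=
      strictAntiOn_of_deriv_neg (convex_Ici 0) hJcont hderiv_neg
    have hJ1 : J 1 < 0 := by
      have := hstrict Set.self_mem_Ici (Set.mem_Ici.mpr zero_le_one) zero_lt_one
      rw [hJ0] at this; exact this
    obtain ⟨m, hm⟩ : ∃ m : ℝ, m = -J 1 := ⟨_, rfl⟩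
    have hmpos : 0 < m := by rw [hm]; linarith
    have hJleS : ∀ s ≥ (1:ℝ), s ^ δ * (b * s * θ s + θ' s) ≤ -m := by
      intro s hs
      have hs0 : (0:ℝ) < s := by linarith
      have h := hanti (Set.mem_Ici.mpr zero_le_one) (Set.mem_Ici.mpr hs0.le) hs
      have hs1 : s ^ (δ+1) = s ^ δ * s := by rw [Real.rpow_add hs0, Real.rpow_one]
      have he : s ^ δ * (b * s * θ s + θ' s) = J s := by
        simp only [hJdef, pow_one]; rw [hs1]; ring
      rw [he]; rw [hm]; linarith
    obtain ⟨S₀, hS₀⟩ : ∃ S₀ : ℝ, S₀ = max 1 (2*δ/b) := ⟨_, rfl⟩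
    have hS₀1 : (1:ℝ) ≤ S₀ := by rw [hS₀]; exact le_max_left _ _
    have hexpb : ∀ s : ℝ, S₀ ≤ s → s ^ δ ≤ Real.exp (b * s^2 / 2) := by
      intro s hs
      have hs1 : (1:ℝ) ≤ s := le_trans hS₀1 hs
      have hs0 : (0:ℝ) < s := by linarith
      have hsb : 2*δ/b ≤ s := le_trans (by rw [hS₀] at hs ⊢; exact le_max_right _ _) hs
      rw [Real.rpow_def_of_pos hs0]
      apply Real.exp_le_exp.mpr
      have hlog : Real.log s ≤ s := (Real.log_le_sub_one_of_pos hs0).trans (by linarith)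
      have h2d : 2*δ ≤ b*s := by rw [div_le_iff₀ hbpos] at hsb; linarith
      nlinarith [mul_le_mul_of_nonneg_right hlog hδpos.le,
        mul_le_mul_of_nonneg_right h2d hs0.le]
    obtain ⟨F, hF⟩ : ∃ F : ℝ → ℝ,
        F = fun s => Real.exp (b * s^2/2) * θ s + m * s := ⟨_, rfl⟩
    have hFd : ∀ s ≥ (1:ℝ), HasDerivAt F
        (Real.exp (b*s^2/2) * (b*s) * θ s + Real.exp (b*s^2/2) * θ' s + m) s := by
      intro s hs
      have hs0 : (0:ℝ) < s := by linarith
      have h1 : HasDerivAt (fun s : ℝ => b * s^2/2) (b*s) s := by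
        have := ((hasDerivAt_pow 2 s).const_mul b).div_const 2
        refine this.congr_deriv ?_
        simp; ring
      have h2 := h1.exp.mul (hθ s hs0.le)
      have h3 := (hasDerivAt_id s).const_mul m
      rw [hF]
      refine (h2.add h3).congr_deriv ?_
      ring
    have hFd_nonpos : ∀ s, S₀ ≤ s →
        Real.exp (b*s^2/2) * (b*s) * θ s + Real.exp (b*s^2/2) * θ' s + m ≤ 0 := by
      intro s hs
      have hs1 : (1:ℝ) ≤ s := le_trans hS₀1 hs
      have hs0 : (0:ℝ) < s := by linarith
      have hE : s ^ δ ≤ Real.exp (b*s^2/2) := hexpb s hs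
      have hxp : 0 < s ^ δ := Real.rpow_pos_of_pos hs0 δ
      have hIne := hJleS s hs1
      have hneg : b*s*θ s + θ' s ≤ 0 := by
        by_contra hcon
        push_neg at hcon
        nlinarith [mul_pos hxp hcon]
      have h1 : Real.exp (b*s^2/2) * (b*s*θ s + θ' s) ≤ s ^ δ * (b*s*θ s + θ' s) :=
        mul_le_mul_of_nonpos_right hE hneg
      nlinarith [h1, hIne]
    have hFanti : AntitoneOn F (Set.Ici S₀) := by
      apply antitoneOn_of_deriv_nonpos (convex_Ici S₀)
      · exact fun s hs => (hFd s (le_trans hS₀1 hs)).continuousAt.continuousWithinAt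
      · rw [interior_Ici]
        exact fun x hx =>
          (hFd x (le_trans hS₀1 hx.le)).differentiableAt.differentiableWithinAt
      · rw [interior_Ici]
        intro x hx
        rw [(hFd x (le_trans hS₀1 hx.le)).deriv]
        exact hFd_nonpos x hx.le
    obtain ⟨S, hSdef⟩ : ∃ S : ℝ, S = max S₀ (F S₀ / m) := ⟨_, rfl⟩
    have hS₀S : S₀ ≤ S := by rw [hSdef]; exact le_max_left _ _
    have hle := hFanti Set.self_mem_Ici (Set.mem_Ici.mpr hS₀S) hS₀S
    have hθS : 0 < θ S := hpos S (by linarith)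
    have hFS : F S = Real.exp (b*S^2/2) * θ S + m * S := by rw [hF]
    have hmS : F S₀ ≤ m * S := by
      have h : F S₀ / m ≤ S := by rw [hSdef]; exact le_max_right _ _
      rw [div_le_iff₀ hmpos] at h
      calc F S₀ ≤ S * m := h
        _ = m * S := by ring
    have hEpos : 0 < Real.exp (b*S^2/2) * θ S := mul_pos (Real.exp_pos _) hθS
    linarith [hle, hmS, hEpos, hFS]
  · -- k ≥ 2 case
    obtain ⟨r, hr⟩ : ∃ r : ℝ, r = (k:ℝ) := ⟨_, rfl⟩
    have hr1 : 1 < r := by rw [hr]; exact_mod_cast hk2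
    have hr0 : 0 < r := by linarith
    have hrne : r ≠ 0 := hr0.ne'
    obtain ⟨p, hp⟩ : ∃ p : ℝ, p = (r - 1)/r := ⟨_, rfl⟩
    have hppos : 0 < p := by rw [hp]; apply div_pos <;> linarith
    have hroot : ∀ s, (1:ℝ) ≤ s → (b * s * θ s) ^ (1/r) ≤ -θ' s := by
      intro s hs
      have hs0 : (0:ℝ) < s := by linarith
      have hθs := hpos s hs0.le
      have hbs : 0 < b * s * θ s := mul_pos (mul_pos hbpos hs0) hθs
      have hkk := hkey s hs0
      have hneg : 0 < -θ' s := by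
        by_contra hcon
        push_neg at hcon
        have : (-θ' s) ^ k ≤ 0 := hkodd.pow_nonpos hcon
        linarith
      calc (b * s * θ s) ^ (1/r) ≤ ((-θ' s) ^ k) ^ (1/r) := by
            apply Real.rpow_le_rpow hbs.le hkk (one_div_nonneg.mpr hr0.le)
        _ = ((-θ' s) ^ r) ^ (1/r) := by rw [hr, Real.rpow_natCast]
        _ = (-θ' s) ^ (r * (1/r)) := (Real.rpow_mul hneg.le r (1/r)).symm
        _ = -θ' s := by rw [mul_one_div, div_self hrne, Real.rpow_one]
    obtain ⟨C, hC⟩ : ∃ C : ℝ, C = p * b ^ (1/r) := ⟨_, rfl⟩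
    have hbr : (0:ℝ) < b ^ (1/r) := Real.rpow_pos_of_pos hbpos _
    have hCpos : 0 < C := by rw [hC]; exact mul_pos hppos hbr
    obtain ⟨A, hA⟩ : ∃ A : ℝ, A = C * (r/(r+1)) := ⟨_, rfl⟩
    have hApos : 0 < A := by
      rw [hA]; exact mul_pos hCpos (div_pos hr0 (by linarith))
    obtain ⟨G, hG⟩ : ∃ G : ℝ → ℝ,
        G = fun s => θ s ^ p + A * s ^ ((r+1)/r) := ⟨_, rfl⟩
    have hGd : ∀ s, (1:ℝ) ≤ s → HasDerivAt G
        (θ' s * p * θ s ^ (p-1) + A * ((r+1)/r * s ^ ((r+1)/r - 1))) s := by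
      intro s hs
      have hs0 : (0:ℝ) < s := by linarith
      have h1 := (hθ s hs0.le).rpow_const (p := p) (Or.inl (hpos s hs0.le).ne')
      have h2 := (Real.hasDerivAt_rpow_const (x := s) (p := (r+1)/r) (Or.inl hs0.ne')).const_mul A
      rw [hG]
      exact h1.add h2
    have hGd_nonpos : ∀ s, (1:ℝ) ≤ s →
        θ' s * p * θ s ^ (p-1) + A * ((r+1)/r * s ^ ((r+1)/r - 1)) ≤ 0 := by
      intro s hs
      have hs0 : (0:ℝ) < s := by linarith
      have hθs := hpos s hs0.le
      have hroot' := hroot s hs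
      have he : (r+1)/r - 1 = 1/r := by field_simp; ring
      rw [he]
      have hrr : r/(r+1) * ((r+1)/r) = 1 := by
        field_simp
      have hA' : A * ((r+1)/r * s ^ (1/r)) = C * s ^ (1/r) := by
        rw [hA]
        calc C * (r/(r+1)) * ((r+1)/r * s ^ (1/r))
            = C * (r/(r+1) * ((r+1)/r)) * s ^ (1/r) := by ring
          _ = C * s ^ (1/r) := by rw [hrr, mul_one]
      rw [hA']
      have e0 : θ s ^ (1/r) * θ s ^ (p-1) = 1 := by
        rw [← Real.rpow_add hθs]
        have hz : 1/r + (p-1) = 0 := by rw [hp]; field_simp; ring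
        rw [hz, Real.rpow_zero]
      have e1 : (b * s * θ s) ^ (1/r) = b ^ (1/r) * s ^ (1/r) * θ s ^ (1/r) := by
        rw [Real.mul_rpow (mul_nonneg hbpos.le hs0.le) hθs.le,
          Real.mul_rpow hbpos.le hs0.le]
      have hpθ : (0:ℝ) ≤ p * θ s ^ (p-1) :=
        mul_nonneg hppos.le (Real.rpow_nonneg hθs.le _)
      have hm := mul_le_mul_of_nonneg_left hroot' hpθ
      have hL : p * θ s ^ (p-1) * (b * s * θ s) ^ (1/r) = C * s ^ (1/r) := by
        rw [e1, hC]
        calc p * θ s ^ (p-1) * (b ^ (1/r) * s ^ (1/r) * θ s ^ (1/r))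
            = p * b ^ (1/r) * s ^ (1/r) * (θ s ^ (1/r) * θ s ^ (p-1)) := by ring
          _ = p * b ^ (1/r) * s ^ (1/r) := by rw [e0, mul_one]
      rw [hL] at hm
      nlinarith [hm]
    have hGanti : AntitoneOn G (Set.Ici 1) := by
      apply antitoneOn_of_deriv_nonpos (convex_Ici 1)
      · exact fun s hs => (hGd s hs).continuousAt.continuousWithinAt
      · rw [interior_Ici]
        exact fun x hx => (hGd x hx.le).differentiableAt.differentiableWithinAt
      · rw [interior_Ici]
        intro x hx
        rw [(hGd x hx.le).deriv]
        exact hGd_nonpos x hx.le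
    obtain ⟨S, hSdef⟩ : ∃ S : ℝ, S = max 1 (G 1 / A) := ⟨_, rfl⟩
    have hS1 : (1:ℝ) ≤ S := by rw [hSdef]; exact le_max_left _ _
    have hle := hGanti Set.self_mem_Ici (Set.mem_Ici.mpr hS1) hS1
    have hθS : 0 < θ S ^ p := Real.rpow_pos_of_pos (hpos S (by linarith)) p
    have hSp : S ≤ S ^ ((r+1)/r) := by
      calc S = S ^ (1:ℝ) := (Real.rpow_one S).symm
        _ ≤ S ^ ((r+1)/r) := Real.rpow_le_rpow_of_exponent_le hS1
            (by rw [le_div_iff₀ hr0]; linarith)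
    have hGS : G S = θ S ^ p + A * S ^ ((r+1)/r) := by rw [hG]
    have hAS : G 1 ≤ A * S := by
      have h : G 1 / A ≤ S := by rw [hSdef]; exact le_max_right _ _
      rw [div_le_iff₀ hApos] at h
      calc G 1 ≤ S * A := h
        _ = A * S := by ring
    have h2 : A * S ≤ A * S ^ ((r+1)/r) := mul_le_mul_of_nonneg_left hSp hApos.le
    linarith [hle, hGS, hAS, h2, hθS]
end

section
/- Let n > 2, q > (n+2)/(n-2), κ = 4/(q-1), A = (κ(κ+2)/(n-2-κ))^{1/(q-1)}, B = 1/(n-2-κ). Then v(r) = A(1 + B r²)^{-2/(q-1)} satisfies the equation (r^{n-1} v')' + r^{n-1}(r v' + κ v + |v|^{q-1}v) = 0 for all r > 0, together with v(0) = A and v'(0) = 0. -/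
lemma profile_hasDerivAt (A B p : ℝ) (hB : 0 < B) (x : ℝ) :
    HasDerivAt (fun y : ℝ => A * (1 + B * y ^ 2) ^ p)
      (2 * A * B * p * x * (1 + B * x ^ 2) ^ (p - 1)) x := by
  have hu : (0:ℝ) < 1 + B * x ^ 2 := by positivity
  have h1 : HasDerivAt (fun y : ℝ => 1 + B * y ^ 2) (2 * B * x) x := by
    have := ((hasDerivAt_pow 2 x).const_mul B).const_add 1
    refine this.congr_deriv ?_
    push_cast; ring
  have h2 : HasDerivAt (fun y : ℝ => (1 + B * y ^ 2) ^ p)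
      (2 * B * x * p * (1 + B * x ^ 2) ^ (p - 1)) x :=
    h1.rpow_const (Or.inl hu.ne')
  have h3 := h2.const_mul A
  refine h3.congr_deriv ?_
  ring

/-- The explicit slow-decay profile for `k = 1`. -/
noncomputable def explicitProfile (q A B : ℝ) : ℝ → ℝ :=
  fun r => A * (1 + B * r ^ 2) ^ (-(2 : ℝ) / (q - 1))

/-- For supercritical `q > (n+2)/(n-2)`, `κ = 4/(q-1)`,
`A = (κ(κ+2)/(n-2-κ))^{1/(q-1)}` and `B = 1/(n-2-κ)`, the function
`v(r) = A(1+Br²)^{-2/(q-1)}` solves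
`(r^{n-1}v')' + r^{n-1}(r v' + κ v + |v|^{q-1}v) = 0` with `v(0) = A`, `v'(0) = 0`. -/
theorem stmt15 (n : ℕ) (q κ A B : ℝ) (hn : 2 < n)
    (hq : ((n : ℝ) + 2) / ((n : ℝ) - 2) < q)
    (hκ : κ = 4 / (q - 1))
    (hA : A = (κ * (κ + 2) / ((n : ℝ) - 2 - κ)) ^ ((1 : ℝ) / (q - 1)))
    (hB : B = 1 / ((n : ℝ) - 2 - κ)) :
    (∀ r > (0 : ℝ),
      deriv (fun ρ => ρ ^ ((n : ℝ) - 1) * deriv (explicitProfile q A B) ρ) r +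
        r ^ ((n : ℝ) - 1) * (r * deriv (explicitProfile q A B) r +
          κ * explicitProfile q A B r +
          |explicitProfile q A B r| ^ (q - 1) * explicitProfile q A B r) = 0) ∧
    explicitProfile q A B 0 = A ∧ deriv (explicitProfile q A B) 0 = 0 := by
  have hn2 : (2:ℝ) < (n:ℝ) := by exact_mod_cast hn
  have hnd : (0:ℝ) < (n:ℝ) - 2 := by linarith
  have hqn : (n:ℝ) + 2 < q * ((n:ℝ) - 2) := (div_lt_iff₀ hnd).mp hq
  have hs : (0:ℝ) < q - 1 := by nlinarith
  have hsne : q - 1 ≠ 0 := ne_of_gt hs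
  have hd : (0:ℝ) < (n:ℝ) - 2 - κ := by
    have h4 : 4 / (q - 1) < (n:ℝ) - 2 := (div_lt_iff₀ hs).mpr (by nlinarith)
    rw [hκ]; linarith
  have hκpos : 0 < κ := by rw [hκ]; positivity
  have hBpos : 0 < B := by rw [hB]; positivity
  have hbase : (0:ℝ) < κ * (κ + 2) / ((n : ℝ) - 2 - κ) :=
    div_pos (by nlinarith) hd
  have hApos : 0 < A := by rw [hA]; exact Real.rpow_pos_of_pos hbase _
  have hEP : explicitProfile q A B = fun y : ℝ => A * (1 + B * y ^ 2) ^ (-(2:ℝ) / (q - 1)) := rfl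
  rw [hEP]
  set p : ℝ := -(2:ℝ) / (q - 1) with hp
  have hderiv := profile_hasDerivAt A B p hBpos
  refine ⟨?_, ?_, ?_⟩
  · intro r hr
    have hu : (0:ℝ) < 1 + B * r ^ 2 := by positivity
    have hune := hu.ne'
    -- rewrite the inner function of the outer deriv
    have hfun : (fun ρ : ℝ => ρ ^ ((n:ℝ) - 1) * deriv (fun y : ℝ => A * (1 + B * y ^ 2) ^ p) ρ)
        = fun ρ : ℝ => (2 * A * B * p) * (ρ ^ ((n:ℝ) - 1) * (ρ * (1 + B * ρ ^ 2) ^ (p - 1))) := by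
      funext ρ
      rw [(hderiv ρ).deriv]
      ring
    rw [hfun, (hderiv r).deriv]
    -- outer derivative
    have h1 : HasDerivAt (fun y : ℝ => 1 + B * y ^ 2) (2 * B * r) r := by
      have := ((hasDerivAt_pow 2 r).const_mul B).const_add 1
      refine this.congr_deriv ?_
      push_cast; ring
    have h5 : HasDerivAt (fun ρ : ℝ => (1 + B * ρ ^ 2) ^ (p - 1))
        (2 * B * r * (p - 1) * (1 + B * r ^ 2) ^ (p - 1 - 1)) r :=
      h1.rpow_const (Or.inl hune)
    have h6 : HasDerivAt (fun ρ : ℝ => ρ * (1 + B * ρ ^ 2) ^ (p - 1))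
        (1 * (1 + B * r ^ 2) ^ (p - 1) + r * (2 * B * r * (p - 1) * (1 + B * r ^ 2) ^ (p - 1 - 1))) r :=
      (hasDerivAt_id r).mul h5
    have h4 : HasDerivAt (fun ρ : ℝ => ρ ^ ((n:ℝ) - 1)) (((n:ℝ) - 1) * r ^ ((n:ℝ) - 1 - 1)) r :=
      Real.hasDerivAt_rpow_const (Or.inl hr.ne')
    have hbig : HasDerivAt
        (fun ρ : ℝ => (2 * A * B * p) * (ρ ^ ((n:ℝ) - 1) * (ρ * (1 + B * ρ ^ 2) ^ (p - 1))))
        ((2 * A * B * p) * ((((n:ℝ) - 1) * r ^ ((n:ℝ) - 1 - 1)) * (r * (1 + B * r ^ 2) ^ (p - 1))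
          + r ^ ((n:ℝ) - 1) * (1 * (1 + B * r ^ 2) ^ (p - 1)
            + r * (2 * B * r * (p - 1) * (1 + B * r ^ 2) ^ (p - 1 - 1))))) r :=
      (h4.mul h6).const_mul (2 * A * B * p)
    rw [hbig.deriv]
    -- the nonlinear term
    have hAq : A ^ (q - 1) = κ * (κ + 2) * B := by
      rw [hA, ← Real.rpow_mul hbase.le, one_div_mul_cancel hsne, Real.rpow_one, hB]
      ring
    have habs : |A * (1 + B * r ^ 2) ^ p| ^ (q - 1) * (A * (1 + B * r ^ 2) ^ p)
        = κ * (κ + 2) * B * A * (1 + B * r ^ 2) ^ (p - 2) := by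
      have hvpos : 0 < A * (1 + B * r ^ 2) ^ p :=
        mul_pos hApos (Real.rpow_pos_of_pos hu _)
      rw [abs_of_pos hvpos, Real.mul_rpow hApos.le (Real.rpow_pos_of_pos hu p).le,
        ← Real.rpow_mul hu.le, hAq]
      have he : p * (q - 1) = -2 := by rw [hp]; field_simp
      rw [he]
      have h2 : (1 + B * r ^ 2) ^ (-2:ℝ) * (1 + B * r ^ 2) ^ p = (1 + B * r ^ 2) ^ (p - 2) := by
        rw [← Real.rpow_add hu, show (-2:ℝ) + p = p - 2 from by ring]
      linear_combination (κ * (κ + 2) * B * A) * h2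
    rw [habs]
    -- reduce all rpow atoms
    have hup1 : (1 + B * r ^ 2) ^ (p - 1) = (1 + B * r ^ 2) ^ (p - 2) * (1 + B * r ^ 2) := by
      rw [← Real.rpow_add_one hune (p - 2), show p - 2 + 1 = p - 1 from by ring]
    have hup2 : (1 + B * r ^ 2) ^ p = (1 + B * r ^ 2) ^ (p - 2) * (1 + B * r ^ 2) ^ (2:ℕ) := by
      rw [← Real.rpow_natCast (1 + B * r ^ 2) 2, ← Real.rpow_add hu]
      norm_num
    have hrn : r ^ ((n:ℝ) - 1) = r ^ ((n:ℝ) - 1 - 1) * r := by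
      rw [← Real.rpow_add_one hr.ne', show (n:ℝ) - 1 - 1 + 1 = (n:ℝ) - 1 from by ring]
    beta_reduce
    rw [show p - 1 - 1 = p - 2 from by ring, hup1, hup2, hrn]
    have hκ2 : κ = -2 * p := by rw [hκ, hp]; ring
    have hrel : B * ((n:ℝ) - 2 - κ) = 1 := by
      rw [hB, one_div]; exact inv_mul_cancel₀ hd.ne'
    rw [hκ2] at hrel ⊢
    linear_combination (2 * p * (1 + B * r ^ 2) * A * ((1 + B * r ^ 2) ^ (p - 2))
      * (r ^ ((n:ℝ) - 1 - 1)) * r) * hrel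
  · simp
  · rw [(hderiv 0).deriv]; simp
end
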